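/- arXiv:2011.08524 — 2 statements merged into one kernel-verified Lean document; each statement's English description precedes it below -/
import Mathlib

section
/- Let u = (u_j)_{j≥1} be a complex sequence with sup_j |u_j| ≤ 1, and for each m ≥ 1 set x_m = ∑_{j=1}^m (1 − 1/m) u_j e_j. Then x_m ∈ 𝔻_X for every m, and for every continuous linear functional x^* ∈ X^* with ∑_{j=1}^∞ |x^*(e_j)| < ∞ one has x^*(x_m) → ∑_{j=1}^∞ u_j x^*(e_j) as m → ∞. (Hence 𝔻_X is dense in the closed unit ball of (X^♯)^* for the topology σ((X^♯)^*, X^♯).) -/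
open Filter Topology

noncomputable section

structure SchauderBasisC (X : Type*) [NormedAddCommGroup X] [NormedSpace ℂ X] where
  e : ℕ → X
  coord : ℕ → X →L[ℂ] ℂ
  norm_e : ∀ j, ‖e j‖ = 1
  coord_e : ∀ i j, coord i (e j) = if i = j then 1 else 0
  coord_bdd : ∃ C : ℝ, ∀ j, ‖coord j‖ ≤ C
  expand : ∀ x : X,
    Tendsto (fun n => ∑ j ∈ Finset.range n, coord j x • e j) atTop (nhds x)

def polydisk {X : Type*} [NormedAddCommGroup X] [NormedSpace ℂ X]
    (B : SchauderBasisC X) (r : ℕ → ℝ) : Set X :=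
  {x | ∀ j, ‖B.coord j x‖ < r j}

lemma coord_sum {X : Type*} [NormedAddCommGroup X] [NormedSpace ℂ X]
    (B : SchauderBasisC X) (c : ℕ → ℂ) (m i : ℕ) :
    B.coord i (∑ j ∈ Finset.range m, c j • B.e j) = if i < m then c i else 0 := by
  rw [map_sum]
  simp only [map_smul, B.coord_e, smul_eq_mul]
  simp only [mul_ite, mul_one, mul_zero]
  rw [Finset.sum_ite_eq]
  simp [Finset.mem_range]

/-- for `u ∈ ℓ_∞` with `sup_j |u_j| ≤ 1` and
`x_m = ∑_{j=1}^m (1 − 1/m) u_j e_j`, every `x_m` (for `m ≥ 1`) lies in `𝔻_X`, and for every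
`x^* ∈ X^*` with `∑_j |x^*(e_j)| < ∞` one has `x^*(x_m) → ∑_j u_j x^*(e_j)`. -/
theorem stmt7 {X : Type*} [NormedAddCommGroup X] [NormedSpace ℂ X] [CompleteSpace X]
    (B : SchauderBasisC X) (u : ℕ → ℂ) (hu : ∀ j, ‖u j‖ ≤ 1) :
    (∀ m : ℕ, 1 ≤ m →
      (∑ j ∈ Finset.range m, ((1 - 1 / (m : ℂ)) * u j) • B.e j) ∈ polydisk B (fun _ => 1)) ∧
    (∀ φ : X →L[ℂ] ℂ, Summable (fun j => ‖φ (B.e j)‖) →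
      Tendsto (fun m : ℕ => φ (∑ j ∈ Finset.range m, ((1 - 1 / (m : ℂ)) * u j) • B.e j))
        atTop (nhds (∑' j, u j * φ (B.e j)))) := by
  constructor
  · intro m hm i
    rw [coord_sum]
    by_cases h : i < m
    · simp only [h, if_true]
      have hmr : (1:ℝ) ≤ m := by exact_mod_cast hm
      have h1 : ‖(1 - 1 / (m : ℂ))‖ = 1 - 1/(m:ℝ) := by
        have : (1 - 1 / (m : ℂ)) = ((1 - 1/(m:ℝ) : ℝ) : ℂ) := by push_cast; ring
        rw [this, Complex.norm_real, Real.norm_of_nonneg]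
        simp only [sub_nonneg]
        exact div_le_one_of_le₀ hmr (by positivity)
      calc ‖(1 - 1 / (m : ℂ)) * u i‖ ≤ (1 - 1/(m:ℝ)) * 1 := by
            rw [norm_mul, h1]
            exact mul_le_mul_of_nonneg_left (hu i) (by
              simp only [sub_nonneg]; exact div_le_one_of_le₀ hmr (by positivity))
          _ < 1 := by
            rw [mul_one]
            have : 0 < 1/(m:ℝ) := by positivity
            linarith
    · simp [h]
  · intro φ hφ
    have hsum : Summable (fun j => u j * φ (B.e j)) := by
      apply Summable.of_norm
      apply Summable.of_nonneg_of_le (fun j => norm_nonneg _) _ hφ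
      intro j
      rw [norm_mul]
      calc ‖u j‖ * ‖φ (B.e j)‖ ≤ 1 * ‖φ (B.e j)‖ :=
        mul_le_mul_of_nonneg_right (hu j) (norm_nonneg _)
        _ = ‖φ (B.e j)‖ := one_mul _
    have key : ∀ m : ℕ, φ (∑ j ∈ Finset.range m, ((1 - 1 / (m : ℂ)) * u j) • B.e j)
        = (1 - 1 / (m : ℂ)) * ∑ j ∈ Finset.range m, u j * φ (B.e j) := by
      intro m
      rw [map_sum, Finset.mul_sum]
      congr 1; ext j
      rw [map_smul, smul_eq_mul]; ring
    simp only [key]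
    have h1 : Tendsto (fun m : ℕ => (1 - 1 / (m : ℂ))) atTop (nhds 1) := by
      have h0 : Tendsto (fun m : ℕ => (1 / (m : ℂ))) atTop (nhds 0) := by
        have h := (Complex.continuous_ofReal.tendsto 0).comp tendsto_one_div_atTop_nhds_zero_nat
        have h' : Tendsto (fun m : ℕ => (1 / (m : ℂ))) atTop (nhds ((0:ℝ):ℂ)) :=
          h.congr (fun m => by simp only [Function.comp_apply]; push_cast; ring)
        simpa using h'
      simpa using tendsto_const_nhds.sub h0
    have h2 : Tendsto (fun m : ℕ => ∑ j ∈ Finset.range m, u j * φ (B.e j)) atTop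
        (nhds (∑' j, u j * φ (B.e j))) := hsum.hasSum.tendsto_sum_nat
    simpa using h1.mul h2
end
end

section
/- For every 0 < ρ < 1 and every ε > 0 there exists a linear map T : ℓ₁ → H^∞(𝔻_X) such that ‖β‖_{ℓ₁} ≤ sup_{x ∈ 𝔻_X} |T(β)(x)| ≤ (1+ε)‖β‖_{ℓ₁} for every β ∈ ℓ₁, and for every β ∈ ℓ₁ with β ≠ 0 and every u ∈ ℓ_∞ with ‖u‖_∞ ≤ ρ, the cluster set Cl_{𝔻_X}(T(β), u) contains an open disk of positive radius in ℂ. (Thus E_{ρ 𝔻̄_X^σ}(𝔻_X) ∪ {0} contains an almost isometric copy of ℓ₁.) -/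
open Filter Topology Metric

noncomputable section

def clusterSetDX {X : Type*} [NormedAddCommGroup X] [NormedSpace ℂ X]
    (B : SchauderBasisC X) (g : X → ℂ) (u : ℕ → ℂ) : Set ℂ :=
  {lam | ∃ (ι : Type) (l : Filter ι) (x : ι → X), l.NeBot ∧
    (∀ i, x i ∈ polydisk B (fun _ => 1)) ∧
    (∀ a : lp (fun _ : ℕ => ℂ) 1,
      Tendsto (fun i => ∑' j, a j * B.coord j (x i)) l (nhds (∑' j, a j * u j))) ∧
    Tendsto (fun i => g (x i)) l (nhds lam)}

/- ### Auxiliary material -/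

set_option maxHeartbeats 1600000

open scoped Classical

section MobLemmas

/-- Möbius map `(1-w)/(1+w)`, mapping the unit disk to the right half plane. -/
def Mob (w : ℂ) : ℂ := (1 - w) / (1 + w)

def MobD (w : ℂ) : ℂ := -2 / (1 + w) ^ 2

lemma mob_zero : Mob 0 = 1 := by simp [Mob]

lemma normSq_lt_one_of_norm_lt_one {w : ℂ} (h : ‖w‖ < 1) : Complex.normSq w < 1 := by
  have h0 : (0:ℝ) ≤ ‖w‖ := norm_nonneg w
  have : Complex.normSq w = ‖w‖ ^ 2 := by
    rw [← Complex.sq_norm]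
  nlinarith

lemma one_add_ne_zero_of_norm_lt_one {w : ℂ} (h : ‖w‖ < 1) : 1 + w ≠ 0 := by
  intro hc
  have : w = -1 := by linear_combination hc
  rw [this] at h; simp at h

lemma mob_re_nonneg {w : ℂ} (h : ‖w‖ < 1) : 0 ≤ (Mob w).re := by
  have h1 : Complex.normSq w < 1 := normSq_lt_one_of_norm_lt_one h
  rw [Mob, Complex.div_re]
  have h2 : (0:ℝ) ≤ Complex.normSq (1 + w) := Complex.normSq_nonneg _
  have key : (1 - w).re * (1 + w).re + (1 - w).im * (1 + w).im = 1 - Complex.normSq w := by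
    simp [Complex.normSq_apply]; ring
  have : (1 - w).re * (1 + w).re / Complex.normSq (1 + w)
      + (1 - w).im * (1 + w).im / Complex.normSq (1 + w)
      = (1 - Complex.normSq w) / Complex.normSq (1 + w) := by
    rw [← add_div, key]
  rw [this]
  exact div_nonneg (by linarith) h2

lemma mob_norm_le {w : ℂ} {r : ℝ} (hw : ‖w‖ ≤ r) (hr : r < 1) :
    ‖Mob w‖ ≤ (1 + r) / (1 - r) := by
  have h0 : (0:ℝ) ≤ r := le_trans (norm_nonneg w) hw
  have h1 : ‖(1:ℂ) - w‖ ≤ 1 + r := by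
    calc ‖(1:ℂ) - w‖ ≤ ‖(1:ℂ)‖ + ‖w‖ := norm_sub_le _ _
    _ ≤ 1 + r := by simp; exact hw
  have h2 : 1 - r ≤ ‖(1:ℂ) + w‖ := by
    have := norm_sub_norm_le (1:ℂ) (-w)
    simp only [norm_neg, sub_neg_eq_add, norm_one] at this
    linarith [this]
  have h3 : (0:ℝ) < 1 - r := by linarith
  rw [Mob, norm_div]
  calc ‖(1:ℂ) - w‖ / ‖(1:ℂ) + w‖ ≤ (1 + r) / (1 - r) := by
        apply div_le_div₀ (by positivity) h1 h3 h2

lemma mob_norm_le_three {w : ℂ} (h : ‖w‖ ≤ 1/2) : ‖Mob w‖ ≤ 3 := by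
  have := mob_norm_le h (by norm_num)
  norm_num at this
  exact this

lemma mobD_norm_le_eight {w : ℂ} (h : ‖w‖ ≤ 1/2) : ‖MobD w‖ ≤ 8 := by
  have h2 : (1:ℝ)/2 ≤ ‖(1:ℂ) + w‖ := by
    have := norm_sub_norm_le (1:ℂ) (-w)
    simp only [norm_neg, sub_neg_eq_add, norm_one] at this
    linarith
  rw [MobD, norm_div]
  have : (1:ℝ)/4 ≤ ‖((1:ℂ) + w) ^ 2‖ := by
    rw [norm_pow]
    nlinarith
  rw [div_le_iff₀ (by linarith)]
  have : ‖(-2 : ℂ)‖ = 2 := by simp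
  rw [this]; nlinarith

lemma mob_norm_lt_one {w : ℂ} (h : 0 < w.re) : ‖Mob w‖ < 1 := by
  have h1 : Complex.normSq (1 - w) < Complex.normSq (1 + w) := by
    simp [Complex.normSq_apply]; nlinarith [w.im]
  have h2 : ‖(1:ℂ) - w‖ < ‖(1:ℂ) + w‖ := by
    have e1 : ‖(1:ℂ) - w‖ ^ 2 = Complex.normSq (1 - w) := by
      rw [← Complex.sq_norm]
    have e2 : ‖(1:ℂ) + w‖ ^ 2 = Complex.normSq (1 + w) := by
      rw [← Complex.sq_norm]
    nlinarith [norm_nonneg ((1:ℂ) - w), norm_nonneg ((1:ℂ) + w)]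
  have h3 : (0:ℝ) < ‖(1:ℂ) + w‖ := lt_of_le_of_lt (norm_nonneg _) h2
  rw [Mob, norm_div, div_lt_one h3]
  exact h2

lemma one_add_ne_zero_of_re_pos {w : ℂ} (h : 0 < w.re) : 1 + w ≠ 0 := by
  intro hc
  have : (1 + w).re = 0 := by rw [hc]; simp
  simp [Complex.add_re] at this
  linarith

lemma mob_invol {w : ℂ} (h : 1 + w ≠ 0) : Mob (Mob w) = w := by
  rw [Mob, Mob]
  have h2 : (1:ℂ) + (1 - w) / (1 + w) = 2 / (1 + w) := by
    field_simp; ring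
  have h3 : (1:ℂ) - (1 - w) / (1 + w) = 2 * w / (1 + w) := by
    field_simp; ring
  rw [h2, h3]
  rw [div_div_div_eq]
  field_simp

lemma hasDerivAt_mob {w : ℂ} (h : 1 + w ≠ 0) : HasDerivAt Mob (MobD w) w := by
  have h1 : HasDerivAt (fun z : ℂ => 1 - z) (-1) w := by
    simpa using (hasDerivAt_id w).const_sub 1
  have h2 : HasDerivAt (fun z : ℂ => 1 + z) (1) w := by
    simpa using (hasDerivAt_id w).const_add 1
  have := h1.fun_div h2 h
  refine this.congr_deriv ?_
  rw [MobD]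
  field_simp
  ring

end MobLemmas

section SeriesLemmas

variable {X : Type*} [NormedAddCommGroup X] [NormedSpace ℂ X]

/-- Derivative of a series of functions, within a convex set, assuming summable
uniform bounds for the derivatives on the set. -/
lemma hasFDerivWithinAt_tsum_of_convex {s : Set X} (hs : Convex ℝ s)
    {f : ℕ → X → ℂ} {g : ℕ → X → X →L[ℂ] ℂ} {u : ℕ → ℝ}
    (hu : Summable u)
    (hf : ∀ n, ∀ x ∈ s, HasFDerivWithinAt (f n) (g n x) s x)
    (hg : ∀ n, ∀ x ∈ s, ‖g n x‖ ≤ u n)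
    (hsum : ∀ x ∈ s, Summable (fun n => f n x))
    {x₀ : X} (hx₀ : x₀ ∈ s) :
    HasFDerivWithinAt (fun y => ∑' n, f n y) (∑' n, g n x₀) s x₀ := by
  have hu0 : ∀ n, 0 ≤ u n := fun n => le_trans (norm_nonneg _) (hg n x₀ hx₀)
  have hgsum : ∀ x ∈ s, Summable (fun n => g n x) := fun x hx =>
    Summable.of_norm_bounded hu (fun n => hg n x hx)
  rw [hasFDerivWithinAt_iff_isLittleO, Asymptotics.isLittleO_iff]
  intro c hc
  obtain ⟨N, hN⟩ : ∃ N, ∑' k, u (k + N) ≤ c / 4 := by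
    have := tendsto_sum_nat_add u
    rw [Metric.tendsto_atTop] at this
    obtain ⟨N, hN⟩ := this (c / 4) (by linarith)
    refine ⟨N, ?_⟩
    have := hN N le_rfl
    rw [Real.dist_eq, sub_zero] at this
    exact le_of_lt (lt_of_le_of_lt (le_abs_self _) this)
  have htail_nonneg : (0:ℝ) ≤ ∑' k, u (k + N) :=
    tsum_nonneg (fun k => hu0 _)
  have hhead : HasFDerivWithinAt (fun y => ∑ n ∈ Finset.range N, f n y)
      (∑ n ∈ Finset.range N, g n x₀) s x₀ :=
    HasFDerivWithinAt.fun_sum (fun n _ => hf n x₀ hx₀)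
  have hheadO := hasFDerivWithinAt_iff_isLittleO.1 hhead
  rw [Asymptotics.isLittleO_iff] at hheadO
  have hev := hheadO (show (0:ℝ) < c/4 by linarith)
  filter_upwards [hev, self_mem_nhdsWithin] with y hy hys
  have hfy : ∑' n, f n y = ∑ n ∈ Finset.range N, f n y + ∑' n, f (n + N) y :=
    (Summable.sum_add_tsum_nat_add N (hsum y hys)).symm
  have hfx : ∑' n, f n x₀ = ∑ n ∈ Finset.range N, f n x₀ + ∑' n, f (n + N) x₀ :=
    (Summable.sum_add_tsum_nat_add N (hsum x₀ hx₀)).symm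
  have hgx : ∑' n, g n x₀ = ∑ n ∈ Finset.range N, g n x₀ + ∑' n, g (n + N) x₀ :=
    (Summable.sum_add_tsum_nat_add N (hgsum x₀ hx₀)).symm
  have hfs_shift : ∀ z ∈ s, Summable fun n => f (n + N) z := fun z hz =>
    (summable_nat_add_iff N).2 (hsum z hz)
  have mvt : ∀ n, ‖f (n + N) y - f (n + N) x₀‖ ≤ u (n + N) * ‖y - x₀‖ := by
    intro n
    exact hs.norm_image_sub_le_of_norm_hasFDerivWithin_le
      (fun x hx => hf (n + N) x hx) (fun x hx => hg (n + N) x hx) hx₀ hys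
  have htail1 : ‖∑' n, f (n + N) y - ∑' n, f (n + N) x₀‖ ≤ (∑' k, u (k + N)) * ‖y - x₀‖ := by
    rw [← Summable.tsum_sub (hfs_shift y hys) (hfs_shift x₀ hx₀)]
    calc ‖∑' n, (f (n + N) y - f (n + N) x₀)‖
        ≤ ∑' n, ‖f (n + N) y - f (n + N) x₀‖ := by
          apply norm_tsum_le_tsum_norm
          apply Summable.of_nonneg_of_le (fun n => norm_nonneg _) mvt
          exact (((summable_nat_add_iff N).2 hu).mul_right _)
      _ ≤ ∑' n, u (n + N) * ‖y - x₀‖ := by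
          apply Summable.tsum_le_tsum mvt
          · apply Summable.of_nonneg_of_le (fun n => norm_nonneg _) mvt
            exact (((summable_nat_add_iff N).2 hu).mul_right _)
          · exact ((summable_nat_add_iff N).2 hu).mul_right _
      _ = (∑' k, u (k + N)) * ‖y - x₀‖ := by
          rw [tsum_mul_right]
  have hgt_sum : Summable fun n => g (n + N) x₀ := (summable_nat_add_iff N).2 (hgsum x₀ hx₀)
  have htail2 : ‖(∑' n, g (n + N) x₀) (y - x₀)‖ ≤ (∑' k, u (k + N)) * ‖y - x₀‖ := by
    have h1 : ‖∑' n, g (n + N) x₀‖ ≤ ∑' k, u (k + N) := by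
      calc ‖∑' n, g (n + N) x₀‖ ≤ ∑' n, ‖g (n + N) x₀‖ := by
            apply norm_tsum_le_tsum_norm
            apply Summable.of_nonneg_of_le (fun n => norm_nonneg _)
              (fun n => hg (n + N) x₀ hx₀) (((summable_nat_add_iff N).2 hu))
        _ ≤ ∑' k, u (k + N) := by
            apply Summable.tsum_le_tsum (fun n => hg (n + N) x₀ hx₀)
            · apply Summable.of_nonneg_of_le (fun n => norm_nonneg _)
                (fun n => hg (n + N) x₀ hx₀) (((summable_nat_add_iff N).2 hu))
            · exact ((summable_nat_add_iff N).2 hu)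
    calc ‖(∑' n, g (n + N) x₀) (y - x₀)‖ ≤ ‖∑' n, g (n + N) x₀‖ * ‖y - x₀‖ :=
          ContinuousLinearMap.le_opNorm _ _
      _ ≤ (∑' k, u (k + N)) * ‖y - x₀‖ := by
          apply mul_le_mul_of_nonneg_right h1 (norm_nonneg _)
  have decomp : ∑' n, f n y - ∑' n, f n x₀ - (∑' n, g n x₀) (y - x₀)
      = (∑ n ∈ Finset.range N, f n y - ∑ n ∈ Finset.range N, f n x₀
          - (∑ n ∈ Finset.range N, g n x₀) (y - x₀))
        + ((∑' n, f (n + N) y - ∑' n, f (n + N) x₀) - (∑' n, g (n + N) x₀) (y - x₀)) := by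
    rw [hfy, hfx, hgx]
    simp only [ContinuousLinearMap.add_apply]
    ring
  rw [decomp]
  calc ‖_ + _‖ ≤ ‖∑ n ∈ Finset.range N, f n y - ∑ n ∈ Finset.range N, f n x₀
          - (∑ n ∈ Finset.range N, g n x₀) (y - x₀)‖
        + ‖(∑' n, f (n + N) y - ∑' n, f (n + N) x₀) - (∑' n, g (n + N) x₀) (y - x₀)‖ :=
        norm_add_le _ _
    _ ≤ c/4 * ‖y - x₀‖ + ((∑' k, u (k + N)) * ‖y - x₀‖ + (∑' k, u (k + N)) * ‖y - x₀‖) := by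
        apply add_le_add hy
        calc ‖_ - _‖ ≤ ‖∑' n, f (n + N) y - ∑' n, f (n + N) x₀‖
              + ‖(∑' n, g (n + N) x₀) (y - x₀)‖ := norm_sub_le _ _
          _ ≤ _ := add_le_add htail1 htail2
    _ ≤ c * ‖y - x₀‖ := by nlinarith [norm_nonneg (y - x₀)]

/-- Dominated convergence for `tsum` along a sequence. -/
lemma tendsto_tsum_dominated {F : ℕ → ℕ → ℂ} {g : ℕ → ℂ} {bound : ℕ → ℝ}
    (hb : Summable bound)
    (h1 : ∀ k, Tendsto (fun m => F m k) atTop (𝓝 (g k)))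
    (h2 : ∀ m k, ‖F m k‖ ≤ bound k) :
    Tendsto (fun m => ∑' k, F m k) atTop (𝓝 (∑' k, g k)) := by
  have hgb : ∀ k, ‖g k‖ ≤ bound k := fun k =>
    le_of_tendsto ((h1 k).norm) (Eventually.of_forall fun m => h2 m k)
  have hFsum : ∀ m, Summable fun k => F m k := fun m =>
    Summable.of_norm_bounded hb (h2 m)
  have hgsum : Summable g := Summable.of_norm_bounded hb hgb
  rw [Metric.tendsto_atTop]
  intro ε hε
  obtain ⟨N, hN⟩ : ∃ N, ∑' k, bound (k + N) < ε / 4 := by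
    have := tendsto_sum_nat_add bound
    rw [Metric.tendsto_atTop] at this
    obtain ⟨N, hN⟩ := this (ε / 4) (by linarith)
    refine ⟨N, ?_⟩
    have := hN N le_rfl
    rw [Real.dist_eq, sub_zero] at this
    exact lt_of_le_of_lt (le_abs_self _) this
  have hhead : Tendsto (fun m => ∑ k ∈ Finset.range N, (F m k - g k)) atTop (𝓝 0) := by
    have : Tendsto (fun m => ∑ k ∈ Finset.range N, (F m k - g k)) atTop
        (𝓝 (∑ k ∈ Finset.range N, (0:ℂ))) := by
      apply tendsto_finset_sum
      intro k _
      simpa using (h1 k).sub_const (g k)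
    simpa using this
  rw [Metric.tendsto_atTop] at hhead
  obtain ⟨M, hM⟩ := hhead (ε / 4) (by linarith)
  refine ⟨M, fun m hm => ?_⟩
  have hMm := hM m hm
  rw [dist_eq_norm] at hMm ⊢
  simp only [sub_zero] at hMm
  have e1 : ∑' k, F m k = ∑ k ∈ Finset.range N, F m k + ∑' k, F m (k + N) :=
    (Summable.sum_add_tsum_nat_add N (hFsum m)).symm
  have e2 : ∑' k, g k = ∑ k ∈ Finset.range N, g k + ∑' k, g (k + N) :=
    (Summable.sum_add_tsum_nat_add N hgsum).symm
  have tb : ∀ (h : ℕ → ℂ), (∀ k, ‖h k‖ ≤ bound k) → Summable h →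
      ‖∑' k, h (k + N)‖ ≤ ∑' k, bound (k + N) := by
    intro h hh hsh
    calc ‖∑' k, h (k + N)‖ ≤ ∑' k, ‖h (k + N)‖ := by
          apply norm_tsum_le_tsum_norm
          apply Summable.of_nonneg_of_le (fun k => norm_nonneg _) (fun k => hh _)
          exact (summable_nat_add_iff N).2 hb
      _ ≤ ∑' k, bound (k + N) := by
          apply Summable.tsum_le_tsum (fun k => hh _)
          · apply Summable.of_nonneg_of_le (fun k => norm_nonneg _) (fun k => hh _)
            exact (summable_nat_add_iff N).2 hb
          · exact (summable_nat_add_iff N).2 hb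
  calc ‖∑' k, F m k - ∑' k, g k‖
      = ‖(∑ k ∈ Finset.range N, (F m k - g k)) + (∑' k, F m (k + N) - ∑' k, g (k + N))‖ := by
        rw [e1, e2, Finset.sum_sub_distrib]
        congr 1
        ring
    _ ≤ ‖∑ k ∈ Finset.range N, (F m k - g k)‖ + (‖∑' k, F m (k + N)‖ + ‖∑' k, g (k + N)‖) := by
        refine le_trans (norm_add_le _ _) ?_
        exact add_le_add le_rfl (norm_sub_le _ _)
    _ ≤ ε/4 + (∑' k, bound (k + N) + ∑' k, bound (k + N)) := by
        apply add_le_add (le_of_lt hMm)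
        exact add_le_add (tb _ (h2 m) (hFsum m)) (tb _ hgb hgsum)
    _ < ε := by linarith

end SeriesLemmas

section BasisLemmas

-- weights
def wt (n : ℕ) : ℝ := 1 / 2 / 2 ^ n

lemma wt_pos (n : ℕ) : 0 < wt n := by rw [wt]; positivity

lemma summable_wt : Summable wt := by
  have : Summable (fun n : ℕ => (1/2 : ℝ) * (1/2)^n) :=
    (summable_geometric_of_lt_one (by norm_num) (by norm_num)).mul_left _
  apply this.congr
  intro n
  rw [wt]
  rw [div_pow, one_pow]
  ring

lemma tsum_wt : ∑' n, wt n = 1 := tsum_geometric_two' 1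

lemma tsum_wtC : ∑' n, ((wt n : ℝ) : ℂ) = 1 := by
  have := Complex.ofRealCLM.map_tsum summable_wt
  rw [tsum_wt] at this
  simpa using this.symm

lemma wt_ne_zero (n : ℕ) : ((wt n : ℝ) : ℂ) ≠ 0 := by
  simp only [ne_eq, Complex.ofReal_eq_zero]
  exact ne_of_gt (wt_pos n)

lemma wt_tendsto : Tendsto (fun n => wt n) atTop (𝓝 0) := summable_wt.tendsto_atTop_zero

-- blocks
def blk (j n : ℕ) : ℕ := 2 * Nat.pair j n + 1

lemma blk_ge_right (j n : ℕ) : n ≤ blk j n := by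
  have := Nat.right_le_pair j n
  rw [blk]; omega

lemma blk_ge_left (j n : ℕ) : j ≤ blk j n := by
  have := Nat.left_le_pair j n
  rw [blk]; omega

lemma blk_ne_even (j n k : ℕ) : blk j n ≠ 2 * k := by
  rw [blk]; omega

lemma blk_inj {j n j' n' : ℕ} (h : blk j n = blk j' n') : j = j' ∧ n = n' := by
  rw [blk, blk] at h
  have : Nat.pair j n = Nat.pair j' n' := by omega
  exact Nat.pair_eq_pair.1 this

variable {X : Type*} [NormedAddCommGroup X] [NormedSpace ℂ X]

lemma mem_pd {B : SchauderBasisC X} {x : X} (hx : x ∈ polydisk B (fun _ => 1)) :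
    ∀ k, ‖B.coord k x‖ < 1 := hx

lemma coord_tendsto (B : SchauderBasisC X) (x : X) :
    Tendsto (fun k => ‖B.coord k x‖) atTop (𝓝 0) := by
  have h1 : Tendsto (fun n => ∑ j ∈ Finset.range (n+1), B.coord j x • B.e j) atTop (𝓝 x) :=
    (B.expand x).comp (tendsto_add_atTop_nat 1)
  have h2 := h1.sub (B.expand x)
  rw [sub_self] at h2
  have h3 : (fun n => (∑ j ∈ Finset.range (n+1), B.coord j x • B.e j)
      - ∑ j ∈ Finset.range n, B.coord j x • B.e j) = fun n => B.coord n x • B.e n := by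
    funext n
    rw [Finset.sum_range_succ]
    abel
  rw [h3] at h2
  have h4 := (tendsto_zero_iff_norm_tendsto_zero.1 h2)
  have h5 : (fun n => ‖B.coord n x • B.e n‖) = fun n => ‖B.coord n x‖ := by
    funext n
    rw [norm_smul, B.norm_e n, mul_one]
  rwa [h5] at h4

lemma coord_blk_event (B : SchauderBasisC X) (j : ℕ) (x : X) :
    ∀ᶠ n in atTop, ‖B.coord (blk j n) x‖ ≤ 1/2 := by
  have h := (coord_tendsto B x).comp
    (tendsto_atTop_mono (fun n => blk_ge_right j n) tendsto_id)
  exact h.eventually (eventually_le_nhds (by norm_num))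

def Sfun (B : SchauderBasisC X) (j : ℕ) (x : X) : ℂ :=
  ∑' n, ((wt n : ℝ) : ℂ) * Mob (B.coord (blk j n) x)

lemma norm_wtC_mul (n : ℕ) (z : ℂ) : ‖((wt n : ℝ) : ℂ) * z‖ = wt n * ‖z‖ := by
  rw [norm_mul, Complex.norm_real, Real.norm_eq_abs, abs_of_pos (wt_pos n)]

lemma summable_Sterm_norm (B : SchauderBasisC X) (j : ℕ) (x : X) :
    Summable fun n => ‖((wt n : ℝ) : ℂ) * Mob (B.coord (blk j n) x)‖ := by
  apply Summable.of_norm_bounded_eventually (summable_wt.mul_left 3)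
  rw [Nat.cofinite_eq_atTop]
  filter_upwards [coord_blk_event B j x] with n hn
  rw [Real.norm_eq_abs, abs_of_nonneg (norm_nonneg _), norm_wtC_mul]
  calc wt n * ‖Mob (B.coord (blk j n) x)‖ ≤ wt n * 3 :=
        mul_le_mul_of_nonneg_left (mob_norm_le_three hn) (le_of_lt (wt_pos n))
    _ = 3 * wt n := by ring

lemma summable_Sterm (B : SchauderBasisC X) (j : ℕ) (x : X) :
    Summable fun n => ((wt n : ℝ) : ℂ) * Mob (B.coord (blk j n) x) :=
  Summable.of_norm (summable_Sterm_norm B j x)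

lemma S_re_nonneg (B : SchauderBasisC X) (j : ℕ) {x : X}
    (hx : x ∈ polydisk B (fun _ => 1)) : 0 ≤ (Sfun B j x).re := by
  rw [Sfun, Complex.re_tsum (summable_Sterm B j x)]
  apply tsum_nonneg
  intro n
  rw [Complex.re_ofReal_mul]
  exact mul_nonneg (le_of_lt (wt_pos n)) (mob_re_nonneg (mem_pd hx _))

lemma exp_negS_norm_le_one (B : SchauderBasisC X) (j : ℕ) {x : X}
    (hx : x ∈ polydisk B (fun _ => 1)) : ‖Complex.exp (-Sfun B j x)‖ ≤ 1 := by
  rw [Complex.norm_exp]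
  rw [Real.exp_le_one_iff]
  rw [Complex.neg_re]
  linarith [S_re_nonneg B j hx]

def ceps (ε : ℝ) : ℂ := ((ε/2 : ℝ) : ℂ)

def Ffun (B : SchauderBasisC X) (ε : ℝ) (j : ℕ) (x : X) : ℂ :=
  B.coord (2*j) x + ceps ε * (Complex.exp (-Sfun B j x) - Complex.exp (-1))

lemma Fshape_norm_le {ε : ℝ} (hε : 0 < ε) {a E : ℂ} (ha : ‖a‖ ≤ 1) (hE : ‖E‖ ≤ 1) :
    ‖a + ceps ε * (E - Complex.exp (-1))‖ ≤ 1 + ε := by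
  have h2 : ‖E - Complex.exp (-1 : ℂ)‖ ≤ 2 := by
    calc ‖E - Complex.exp (-1 : ℂ)‖ ≤ ‖E‖ + ‖Complex.exp (-1 : ℂ)‖ := norm_sub_le _ _
      _ ≤ 1 + 1 := by
          apply add_le_add hE
          rw [Complex.norm_exp, Real.exp_le_one_iff]
          norm_num
      _ = 2 := by norm_num
  have h3 : ‖ceps ε‖ = ε/2 := by
    rw [ceps, Complex.norm_real, Real.norm_eq_abs, abs_of_pos (by linarith)]
  calc ‖a + ceps ε * (E - Complex.exp (-1))‖
      ≤ ‖a‖ + ‖ceps ε‖ * ‖E - Complex.exp (-1)‖ := by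
        refine le_trans (norm_add_le _ _) ?_
        rw [norm_mul]
    _ ≤ 1 + (ε/2) * 2 := by
        apply add_le_add ha
        rw [h3]
        apply mul_le_mul_of_nonneg_left h2 (by linarith)
    _ = 1 + ε := by ring

lemma F_norm_le (B : SchauderBasisC X) {ε : ℝ} (hε : 0 < ε) (j : ℕ) {x : X}
    (hx : x ∈ polydisk B (fun _ => 1)) : ‖Ffun B ε j x‖ ≤ 1 + ε := by
  exact Fshape_norm_le hε (le_of_lt (mem_pd hx _)) (exp_negS_norm_le_one B j hx)

def Tmap (B : SchauderBasisC X) (ε : ℝ) (β : lp (fun _ : ℕ => ℂ) 1) : X → ℂ :=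
  fun x => if x ∈ polydisk B (fun _ => 1) then ∑' j, (β j) * Ffun B ε j x else 0

lemma beta_summable (β : lp (fun _ : ℕ => ℂ) 1) : Summable (fun j => ‖β j‖) := by
  have := lp.memℓp β
  rw [memℓp_gen_iff (by norm_num : (0:ℝ) < (1 : ENNReal).toReal)] at this
  simpa using this

lemma beta_norm (β : lp (fun _ : ℕ => ℂ) 1) : ‖β‖ = ∑' j, ‖β j‖ := by
  rw [lp.norm_eq_tsum_rpow (by norm_num : (0:ℝ) < (1 : ENNReal).toReal)]
  simp

lemma summable_TF (B : SchauderBasisC X) {ε : ℝ} (hε : 0 < ε) (β : lp (fun _ : ℕ => ℂ) 1)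
    {x : X} (hx : x ∈ polydisk B (fun _ => 1)) :
    Summable fun j => ‖(β j) * Ffun B ε j x‖ := by
  apply Summable.of_nonneg_of_le (fun j => norm_nonneg _)
    (fun j => ?_) (((beta_summable β).mul_right (1 + ε)))
  rw [norm_mul]
  exact mul_le_mul_of_nonneg_left (F_norm_le B hε j hx) (norm_nonneg _)

lemma pd_convex (B : SchauderBasisC X) : Convex ℝ (polydisk B (fun _ => 1)) := by
  intro x hx y hy a b ha hb hab
  intro k
  have hxk := mem_pd hx k
  have hyk := mem_pd hy k
  have hmap : B.coord k (a • x + b • y) = a • B.coord k x + b • B.coord k y := by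
    rw [map_add, ContinuousLinearMap.map_smul_of_tower, ContinuousLinearMap.map_smul_of_tower]
  show ‖B.coord k (a • x + b • y)‖ < 1
  rw [hmap]
  have key : a * ‖B.coord k x‖ + b * ‖B.coord k y‖ < 1 := by
    by_cases haz : a = 0
    · subst haz
      simp only [zero_mul, zero_add]
      have hb1 : b = 1 := by linarith
      rw [hb1, one_mul]; exact hyk
    · have ha' : 0 < a := lt_of_le_of_ne ha (Ne.symm haz)
      have h1 : a * ‖B.coord k x‖ < a := by nlinarith [norm_nonneg (B.coord k x)]
      have h2 : b * ‖B.coord k y‖ ≤ b := by nlinarith [norm_nonneg (B.coord k y)]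
      linarith
  calc ‖a • B.coord k x + b • B.coord k y‖
      ≤ ‖a • B.coord k x‖ + ‖b • B.coord k y‖ := norm_add_le _ _
    _ = a * ‖B.coord k x‖ + b * ‖B.coord k y‖ := by
        rw [norm_smul, norm_smul, Real.norm_eq_abs, Real.norm_eq_abs,
          abs_of_nonneg ha, abs_of_nonneg hb]
    _ < 1 := key

def DSterm (B : SchauderBasisC X) (j n : ℕ) (x : X) : X →L[ℂ] ℂ :=
  (((wt n : ℝ) : ℂ) * MobD (B.coord (blk j n) x)) • B.coord (blk j n)

def DS (B : SchauderBasisC X) (j : ℕ) (x : X) : X →L[ℂ] ℂ := ∑' n, DSterm B j n x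

lemma DSterm_norm_le (B : SchauderBasisC X) {Cb : ℝ} (hCb : ∀ k, ‖B.coord k‖ ≤ Cb)
    (j n : ℕ) (x : X) (h : ‖B.coord (blk j n) x‖ ≤ 1/2) :
    ‖DSterm B j n x‖ ≤ wt n * (8 * Cb) := by
  have h1 : ‖MobD (B.coord (blk j n) x)‖ ≤ 8 := mobD_norm_le_eight h
  have h2 : ‖B.coord (blk j n)‖ ≤ Cb := hCb _
  have h3 : (0:ℝ) ≤ Cb := le_trans (norm_nonneg _) h2
  rw [DSterm]
  calc ‖(((wt n : ℝ) : ℂ) * MobD (B.coord (blk j n) x)) • B.coord (blk j n)‖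
      ≤ ‖((wt n : ℝ) : ℂ) * MobD (B.coord (blk j n) x)‖ * ‖B.coord (blk j n)‖ :=
        ContinuousLinearMap.opNorm_smul_le _ _
    _ = wt n * ‖MobD (B.coord (blk j n) x)‖ * ‖B.coord (blk j n)‖ := by
        rw [norm_wtC_mul]
    _ ≤ wt n * 8 * Cb := by
        apply mul_le_mul (mul_le_mul_of_nonneg_left h1 (le_of_lt (wt_pos n))) h2
          (norm_nonneg _) (mul_nonneg (le_of_lt (wt_pos n)) (by norm_num))
    _ = wt n * (8 * Cb) := by ring

lemma summable_DSterm_norm (B : SchauderBasisC X) {Cb : ℝ} (hCb : ∀ k, ‖B.coord k‖ ≤ Cb)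
    (j : ℕ) (x : X) : Summable fun n => ‖DSterm B j n x‖ := by
  apply Summable.of_norm_bounded_eventually
    (summable_wt.mul_right _)
  rw [Nat.cofinite_eq_atTop]
  filter_upwards [coord_blk_event B j x] with n hn
  rw [Real.norm_eq_abs, abs_of_nonneg (norm_nonneg _)]
  exact DSterm_norm_le B hCb j n x hn

lemma summable_DSterm (B : SchauderBasisC X) {Cb : ℝ} (hCb : ∀ k, ‖B.coord k‖ ≤ Cb)
    (j : ℕ) (x : X) : Summable fun n => DSterm B j n x :=
  Summable.of_norm (summable_DSterm_norm B hCb j x)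

lemma DS_norm_le (B : SchauderBasisC X) {Cb : ℝ} (hCb : ∀ k, ‖B.coord k‖ ≤ Cb)
    {j : ℕ} {x : X} (hgood : ∀ n, ‖B.coord (blk j n) x‖ ≤ 1/2) :
    ‖DS B j x‖ ≤ 8 * Cb := by
  calc ‖DS B j x‖ ≤ ∑' n, ‖DSterm B j n x‖ :=
        norm_tsum_le_tsum_norm (summable_DSterm_norm B hCb j x)
    _ ≤ ∑' n, wt n * (8 * Cb) := by
        apply Summable.tsum_le_tsum (fun n => DSterm_norm_le B hCb j n x (hgood n))
          (summable_DSterm_norm B hCb j x) (summable_wt.mul_right _)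
    _ = 8 * Cb := by rw [tsum_mul_right, tsum_wt, one_mul]

lemma exists_loc (B : SchauderBasisC X) {Cb : ℝ} (hCb : ∀ k, ‖B.coord k‖ ≤ Cb)
    (hCb1 : 1 ≤ Cb) (x₀ : X) :
    ∃ K : ℕ, ∃ δ : ℝ, 0 < δ ∧
      ∀ x ∈ ball x₀ δ, ∀ k, K ≤ k → ‖B.coord k x‖ ≤ 1/2 := by
  have hev := (coord_tendsto B x₀).eventually (eventually_le_nhds (by norm_num : (0:ℝ) < 1/4))
  obtain ⟨K, hK⟩ := eventually_atTop.1 hev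
  have hCb0 : (0:ℝ) < Cb := lt_of_lt_of_le one_pos hCb1
  refine ⟨K, 1/(4*Cb), by positivity, ?_⟩
  intro x hx k hk
  have h1 : ‖B.coord k x - B.coord k x₀‖ ≤ Cb * ‖x - x₀‖ := by
    rw [← map_sub]
    calc ‖B.coord k (x - x₀)‖ ≤ ‖B.coord k‖ * ‖x - x₀‖ := (B.coord k).le_opNorm _
      _ ≤ Cb * ‖x - x₀‖ := mul_le_mul_of_nonneg_right (hCb k) (norm_nonneg _)
  have h2 : ‖x - x₀‖ < 1/(4*Cb) := by
    rw [← dist_eq_norm]; exact mem_ball.1 hx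
  have h3 : ‖B.coord k x‖ ≤ ‖B.coord k x₀‖ + ‖B.coord k x - B.coord k x₀‖ := by
    calc ‖B.coord k x‖ = ‖B.coord k x₀ + (B.coord k x - B.coord k x₀)‖ := by ring_nf
      _ ≤ _ := norm_add_le _ _
  have h4 : Cb * ‖x - x₀‖ ≤ 1/4 := by
    have e : Cb * (1/(4*Cb)) = 1/4 := by
      field_simp
    nlinarith
  have := hK k hk
  linarith

lemma term_hasFDerivAt (B : SchauderBasisC X) (j n : ℕ) (x : X)
    (hx1 : ‖B.coord (blk j n) x‖ < 1) :
    HasFDerivAt (fun y => ((wt n : ℝ):ℂ) * Mob (B.coord (blk j n) y)) (DSterm B j n x) x := by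
  have h1 : 1 + B.coord (blk j n) x ≠ 0 := one_add_ne_zero_of_norm_lt_one hx1
  have h2 : HasDerivAt Mob (MobD (B.coord (blk j n) x)) (B.coord (blk j n) x) :=
    hasDerivAt_mob h1
  have h3 : HasFDerivAt (fun y : X => B.coord (blk j n) y) (B.coord (blk j n)) x :=
    (B.coord (blk j n)).hasFDerivAt
  have h4 := h2.comp_hasFDerivAt x h3
  have h5 := h4.const_mul ((wt n : ℝ):ℂ)
  have : DSterm B j n x = ((wt n : ℝ):ℂ) • (MobD (B.coord (blk j n) x) • B.coord (blk j n)) := by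
    rw [DSterm, smul_smul]
  rw [this]
  exact h5

lemma hasFDerivWithinAt_S (B : SchauderBasisC X) {Cb : ℝ} (hCb : ∀ k, ‖B.coord k‖ ≤ Cb)
    (hCb1 : 1 ≤ Cb) (j : ℕ) {x₀ : X} (hx₀ : x₀ ∈ polydisk B (fun _ => 1)) :
    HasFDerivWithinAt (Sfun B j) (DS B j x₀) (polydisk B (fun _ => 1)) x₀ := by
  obtain ⟨K, δ, hδ, hloc⟩ := exists_loc B hCb hCb1 x₀
  set s := polydisk B (fun _ => 1) ∩ ball x₀ δ with hs
  have hsx₀ : x₀ ∈ s := ⟨hx₀, mem_ball_self hδ⟩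
  have hconv : Convex ℝ s := (pd_convex B).inter (convex_ball _ _)
  have hsub : s ⊆ polydisk B (fun _ => 1) := Set.inter_subset_left
  have htail : HasFDerivWithinAt
      (fun y => ∑' n, ((wt (n+K) : ℝ):ℂ) * Mob (B.coord (blk j (n+K)) y))
      (∑' n, DSterm B j (n+K) x₀) s x₀ := by
    apply hasFDerivWithinAt_tsum_of_convex hconv
      (u := fun n => wt (n+K) * (8 * Cb))
      (g := fun n x => DSterm B j (n+K) x)
    · exact ((summable_nat_add_iff K).2 summable_wt).mul_right _
    · intro n x hx
      exact (term_hasFDerivAt B j (n+K) x (mem_pd (hsub hx) _)).hasFDerivWithinAt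
    · intro n x hx
      apply DSterm_norm_le B hCb
      exact hloc x hx.2 _ (le_trans (Nat.le_add_left K n) (blk_ge_right j (n+K)))
    · intro x hx
      exact (summable_nat_add_iff K).2 (summable_Sterm B j x)
    · exact hsx₀
  have hhead : HasFDerivWithinAt
      (fun y => ∑ n ∈ Finset.range K, ((wt n : ℝ):ℂ) * Mob (B.coord (blk j n) y))
      (∑ n ∈ Finset.range K, DSterm B j n x₀) s x₀ :=
    HasFDerivWithinAt.fun_sum (fun n _ =>
      (term_hasFDerivAt B j n x₀ (mem_pd hx₀ _)).hasFDerivWithinAt.mono hsub)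
  have hadd := hhead.fun_add htail
  have heq : (fun y => (∑ n ∈ Finset.range K, ((wt n : ℝ):ℂ) * Mob (B.coord (blk j n) y))
      + ∑' n, ((wt (n+K) : ℝ):ℂ) * Mob (B.coord (blk j (n+K)) y)) = Sfun B j := by
    funext y
    exact Summable.sum_add_tsum_nat_add K (summable_Sterm B j y)
  have hDeq : (∑ n ∈ Finset.range K, DSterm B j n x₀) + ∑' n, DSterm B j (n+K) x₀
      = DS B j x₀ := Summable.sum_add_tsum_nat_add K (summable_DSterm B hCb j x₀)
  rw [heq, hDeq] at hadd
  exact (hasFDerivWithinAt_inter (ball_mem_nhds x₀ hδ)).1 hadd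

def DF (B : SchauderBasisC X) (ε : ℝ) (j : ℕ) (x : X) : X →L[ℂ] ℂ :=
  B.coord (2*j) + ceps ε • (Complex.exp (-Sfun B j x) • (-(DS B j x)))

lemma hasFDerivWithinAt_F (B : SchauderBasisC X) {Cb : ℝ} (hCb : ∀ k, ‖B.coord k‖ ≤ Cb)
    (hCb1 : 1 ≤ Cb) (ε : ℝ) (j : ℕ) {x₀ : X} (hx₀ : x₀ ∈ polydisk B (fun _ => 1)) :
    HasFDerivWithinAt (Ffun B ε j) (DF B ε j x₀) (polydisk B (fun _ => 1)) x₀ := by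
  have hS := hasFDerivWithinAt_S B hCb hCb1 j hx₀
  have h2 := (hS.neg).cexp
  have h3 := h2.sub_const (Complex.exp (-1))
  have h4 := h3.const_mul (ceps ε)
  have h5 := ((B.coord (2*j)).hasFDerivAt.hasFDerivWithinAt
    (s := polydisk B (fun _ => 1))).add h4
  exact h5

lemma DF_norm_le (B : SchauderBasisC X) {Cb : ℝ} (hCb : ∀ k, ‖B.coord k‖ ≤ Cb)
    {ε : ℝ} (hε : 0 < ε) (j : ℕ) {x : X} (hxpd : x ∈ polydisk B (fun _ => 1))
    (hgood : ∀ n, ‖B.coord (blk j n) x‖ ≤ 1/2) :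
    ‖DF B ε j x‖ ≤ Cb + ε/2 * (8 * Cb) := by
  rw [DF]
  have h1 : ‖ceps ε • (Complex.exp (-Sfun B j x) • (-(DS B j x)))‖ ≤ ε/2 * (8*Cb) := by
    have e1 : ‖ceps ε‖ = ε/2 := by
      rw [ceps, Complex.norm_real, Real.norm_eq_abs, abs_of_pos (by linarith)]
    have e2 := exp_negS_norm_le_one B j hxpd
    have e3 := DS_norm_le B hCb hgood
    have e4 : (0:ℝ) ≤ Cb := le_trans (norm_nonneg _) (hCb 0)
    calc ‖ceps ε • (Complex.exp (-Sfun B j x) • (-(DS B j x)))‖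
        ≤ ‖ceps ε‖ * ‖Complex.exp (-Sfun B j x) • (-(DS B j x))‖ :=
          ContinuousLinearMap.opNorm_smul_le _ _
      _ ≤ ‖ceps ε‖ * (‖Complex.exp (-Sfun B j x)‖ * ‖-(DS B j x)‖) := by
          apply mul_le_mul_of_nonneg_left (ContinuousLinearMap.opNorm_smul_le _ _) (norm_nonneg _)
      _ ≤ ε/2 * (8*Cb) := by
          rw [e1, norm_neg]
          have : ‖Complex.exp (-Sfun B j x)‖ * ‖DS B j x‖ ≤ 8 * Cb := by
            nlinarith [norm_nonneg (Complex.exp (-Sfun B j x)), norm_nonneg (DS B j x)]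
          nlinarith
  calc ‖B.coord (2*j) + ceps ε • (Complex.exp (-Sfun B j x) • (-(DS B j x)))‖
      ≤ ‖B.coord (2*j)‖ + ‖ceps ε • (Complex.exp (-Sfun B j x) • (-(DS B j x)))‖ :=
        norm_add_le _ _
    _ ≤ Cb + ε/2 * (8 * Cb) := add_le_add (hCb _) h1

lemma Tmap_diffOn (B : SchauderBasisC X) {Cb : ℝ} (hCb : ∀ k, ‖B.coord k‖ ≤ Cb)
    (hCb1 : 1 ≤ Cb) {ε : ℝ} (hε : 0 < ε) (β : lp (fun _ : ℕ => ℂ) 1) :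
    DifferentiableOn ℂ (Tmap B ε β) (polydisk B (fun _ => 1)) := by
  intro x₀ hx₀
  obtain ⟨K, δ, hδ, hloc⟩ := exists_loc B hCb hCb1 x₀
  set s := polydisk B (fun _ => 1) ∩ ball x₀ δ with hs
  have hsx₀ : x₀ ∈ s := ⟨hx₀, mem_ball_self hδ⟩
  have hconv : Convex ℝ s := (pd_convex B).inter (convex_ball _ _)
  have hsub : s ⊆ polydisk B (fun _ => 1) := Set.inter_subset_left
  have hsummain : ∀ x ∈ polydisk B (fun _ => 1), Summable fun j => β j * Ffun B ε j x :=
    fun x hx => Summable.of_norm (summable_TF B hε β hx)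
  have htail : HasFDerivWithinAt
      (fun y => ∑' j, (β (j+K)) * Ffun B ε (j+K) y)
      (∑' j, (β (j+K)) • DF B ε (j+K) x₀) s x₀ := by
    apply hasFDerivWithinAt_tsum_of_convex hconv
      (u := fun j => ‖β (j+K)‖ * (Cb + ε/2 * (8 * Cb)))
      (g := fun j x => (β (j+K)) • DF B ε (j+K) x)
    · exact ((summable_nat_add_iff K).2 (beta_summable β)).mul_right _
    · intro n x hx
      exact ((hasFDerivWithinAt_F B hCb hCb1 ε (n+K) (hsub hx)).mono hsub).const_mul _
    · intro n x hx
      refine le_trans (ContinuousLinearMap.opNorm_smul_le _ _) ?_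
      apply mul_le_mul_of_nonneg_left ?_ (norm_nonneg _)
      apply DF_norm_le B hCb hε _ (hsub hx)
      intro m
      exact hloc x hx.2 _ (le_trans (Nat.le_add_left K n) (blk_ge_left (n+K) m))
    · intro x hx
      exact (summable_nat_add_iff K).2 (hsummain x (hsub hx))
    · exact hsx₀
  have hhead : HasFDerivWithinAt
      (fun y => ∑ j ∈ Finset.range K, (β j) * Ffun B ε j y)
      (∑ j ∈ Finset.range K, (β j) • DF B ε j x₀) s x₀ :=
    HasFDerivWithinAt.fun_sum (fun j _ =>
      ((hasFDerivWithinAt_F B hCb hCb1 ε j hx₀).mono hsub).const_mul _)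
  have hadd := hhead.add htail
  have hwithin_s : HasFDerivWithinAt (fun y => ∑' j, (β j) * Ffun B ε j y)
      ((∑ j ∈ Finset.range K, (β j) • DF B ε j x₀) + ∑' j, (β (j+K)) • DF B ε (j+K) x₀)
      s x₀ := by
    apply hadd.congr
    · intro y hy
      exact (Summable.sum_add_tsum_nat_add K (hsummain y (hsub hy))).symm
    · exact (Summable.sum_add_tsum_nat_add K (hsummain x₀ hx₀)).symm
  have hwithin : HasFDerivWithinAt (fun y => ∑' j, (β j) * Ffun B ε j y)
      ((∑ j ∈ Finset.range K, (β j) • DF B ε j x₀) + ∑' j, (β (j+K)) • DF B ε (j+K) x₀)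
      (polydisk B (fun _ => 1)) x₀ :=
    (hasFDerivWithinAt_inter (ball_mem_nhds x₀ hδ)).1 hwithin_s
  refine ⟨_, hwithin.congr (fun y hy => ?_) ?_⟩
  · show Tmap B ε β y = _
    rw [Tmap]
    simp only [if_pos hy]
  · show Tmap B ε β x₀ = _
    rw [Tmap]
    simp only [if_pos hx₀]

end BasisLemmas

section CoordLemmas

variable {X : Type*} [NormedAddCommGroup X] [NormedSpace ℂ X]

lemma coord_headv (B : SchauderBasisC X) (m : ℕ) (u : ℕ → ℂ) (v : ℂ) (p : ℕ) (hp : m ≤ p)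
    (k : ℕ) :
    B.coord k ((∑ j ∈ Finset.range m, u j • B.e j) + v • B.e p)
      = if k < m then u k else if k = p then v else 0 := by
  rw [map_add, map_sum]
  have h1 : ∀ j ∈ Finset.range m, B.coord k (u j • B.e j) = if k = j then u j else 0 := by
    intro j _
    rw [ContinuousLinearMap.map_smul, B.coord_e, smul_eq_mul, mul_ite, mul_one, mul_zero]
  rw [Finset.sum_congr rfl h1, Finset.sum_ite_eq]
  have h2 : B.coord k (v • B.e p) = if k = p then v else 0 := by
    rw [ContinuousLinearMap.map_smul, B.coord_e, smul_eq_mul, mul_ite, mul_one, mul_zero]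
  rw [h2]
  simp only [Finset.mem_range]
  by_cases hk : k < m
  · rw [if_pos hk, if_pos hk, if_neg (by omega), add_zero]
  · rw [if_neg hk, if_neg hk, zero_add]

lemma coord_evpt_even (B : SchauderBasisC X) (N : ℕ) (c : ℕ → ℂ) {j : ℕ} (hj : j < N) :
    B.coord (2*j) (∑ i ∈ Finset.range N, c i • B.e (2*i)) = c j := by
  rw [map_sum]
  rw [Finset.sum_eq_single j]
  · rw [ContinuousLinearMap.map_smul, B.coord_e, if_pos rfl, smul_eq_mul, mul_one]
  · intro i _ hi
    rw [ContinuousLinearMap.map_smul, B.coord_e, if_neg (by omega), smul_eq_mul, mul_zero]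
  · intro h; exact absurd (Finset.mem_range.2 hj) h

lemma coord_evpt_other (B : SchauderBasisC X) (N : ℕ) (c : ℕ → ℂ) {k : ℕ}
    (hk : ∀ j, j < N → k ≠ 2*j) :
    B.coord k (∑ i ∈ Finset.range N, c i • B.e (2*i)) = 0 := by
  rw [map_sum]
  apply Finset.sum_eq_zero
  intro i hi
  rw [ContinuousLinearMap.map_smul, B.coord_e, if_neg (hk i (Finset.mem_range.1 hi)),
    smul_eq_mul, mul_zero]

end CoordLemmas

section MuLemmas

lemma K0_ge_one {ρ : ℝ} (hρ0 : 0 ≤ ρ) (hρ1 : ρ < 1) : 1 ≤ (1+ρ)/(1-ρ) := by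
  rw [le_div_iff₀ (by linarith)]
  linarith

lemma summable_Mu_norm {ρ : ℝ} (hρ1 : ρ < 1) {u : ℕ → ℂ} (hu : ∀ k, ‖u k‖ ≤ ρ) (j : ℕ) :
    Summable fun n => ‖((wt n:ℝ):ℂ) * Mob (u (blk j n))‖ := by
  apply Summable.of_nonneg_of_le (fun n => norm_nonneg _) (fun n => ?_)
    (summable_wt.mul_right ((1+ρ)/(1-ρ)))
  rw [norm_wtC_mul]
  exact mul_le_mul_of_nonneg_left (mob_norm_le (hu _) hρ1) (wt_pos n).le

lemma summable_Mu {ρ : ℝ} (hρ1 : ρ < 1) {u : ℕ → ℂ} (hu : ∀ k, ‖u k‖ ≤ ρ) (j : ℕ) :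
    Summable fun n => ((wt n:ℝ):ℂ) * Mob (u (blk j n)) :=
  Summable.of_norm (summable_Mu_norm hρ1 hu j)

lemma Su_re_nonneg {ρ : ℝ} (hρ1 : ρ < 1) {u : ℕ → ℂ} (hu : ∀ k, ‖u k‖ ≤ ρ) (j : ℕ) :
    0 ≤ (∑' n, ((wt n:ℝ):ℂ) * Mob (u (blk j n))).re := by
  rw [Complex.re_tsum (summable_Mu hρ1 hu j)]
  apply tsum_nonneg
  intro n
  rw [Complex.re_ofReal_mul]
  exact mul_nonneg (le_of_lt (wt_pos n)) (mob_re_nonneg (lt_of_le_of_lt (hu _) hρ1))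

lemma exp_negSu_norm_le_one {ρ : ℝ} (hρ1 : ρ < 1) {u : ℕ → ℂ} (hu : ∀ k, ‖u k‖ ≤ ρ) (j : ℕ) :
    ‖Complex.exp (-(∑' n, ((wt n:ℝ):ℂ) * Mob (u (blk j n))))‖ ≤ 1 := by
  rw [Complex.norm_exp, Real.exp_le_one_iff, Complex.neg_re]
  linarith [Su_re_nonneg hρ1 hu j]

end MuLemmas

section MainLemmas

variable {X : Type*} [NormedAddCommGroup X] [NormedSpace ℂ X]

lemma Tmap_eq_of_mem (B : SchauderBasisC X) (ε : ℝ) (β : lp (fun _ : ℕ => ℂ) 1) {x : X}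
    (hx : x ∈ polydisk B (fun _ => 1)) :
    Tmap B ε β x = ∑' j, (β j) * Ffun B ε j x := by
  rw [Tmap]
  simp only [if_pos hx]

lemma Tmap_norm_le (B : SchauderBasisC X) {ε : ℝ} (hε : 0 < ε) (β : lp (fun _ : ℕ => ℂ) 1)
    {x : X} (hx : x ∈ polydisk B (fun _ => 1)) :
    ‖Tmap B ε β x‖ ≤ (1 + ε) * ‖β‖ := by
  rw [Tmap_eq_of_mem B ε β hx]
  calc ‖∑' j, (β j) * Ffun B ε j x‖ ≤ ∑' j, ‖(β j) * Ffun B ε j x‖ :=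
        norm_tsum_le_tsum_norm (summable_TF B hε β hx)
    _ ≤ ∑' j, ‖β j‖ * (1 + ε) := by
        apply Summable.tsum_le_tsum ?_ (summable_TF B hε β hx) ((beta_summable β).mul_right _)
        intro j
        rw [norm_mul]
        exact mul_le_mul_of_nonneg_left (F_norm_le B hε j hx) (norm_nonneg _)
    _ = (1 + ε) * ‖β‖ := by rw [tsum_mul_right, beta_norm]; ring

end MainLemmas

/-- for every `0 < ρ < 1` and `ε > 0` there is a linear map
`T : ℓ₁ → H^∞(𝔻_X)` with `‖β‖₁ ≤ sup_{𝔻_X} |T β| ≤ (1+ε)‖β‖₁` such that for every `β ≠ 0`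
and every `u` with `‖u‖_∞ ≤ ρ`, the cluster set `Cl_{𝔻_X}(T β, u)` contains a disk of
positive radius. -/
theorem stmt11 {X : Type*} [NormedAddCommGroup X] [NormedSpace ℂ X] [CompleteSpace X]
    (B : SchauderBasisC X) (ρ : ℝ) (hρ : 0 < ρ) (hρ1 : ρ < 1) (ε : ℝ) (hε : 0 < ε) :
    ∃ T : lp (fun _ : ℕ => ℂ) 1 → (X → ℂ), IsLinearMap ℂ T ∧
      (∀ β, DifferentiableOn ℂ (T β) (polydisk B (fun _ => 1))) ∧
      (∀ β, (∀ x ∈ polydisk B (fun _ => 1), ‖T β x‖ ≤ (1 + ε) * ‖β‖) ∧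
        ‖β‖ ≤ ⨆ x ∈ polydisk B (fun _ => 1), ‖T β x‖) ∧
      (∀ β, β ≠ 0 → ∀ u : ℕ → ℂ, (∀ j, ‖u j‖ ≤ ρ) →
        ∃ (c : ℂ) (r : ℝ), 0 < r ∧ ball c r ⊆ clusterSetDX B (T β) u) := by
  obtain ⟨C0, hC0⟩ := B.coord_bdd
  have hCb : ∀ k, ‖B.coord k‖ ≤ max C0 1 := fun k => le_trans (hC0 k) (le_max_left _ _)
  have hCb1 : (1:ℝ) ≤ max C0 1 := le_max_right _ _
  refine ⟨Tmap B ε, ?_, fun β => Tmap_diffOn B hCb hCb1 hε β, ?_, ?_⟩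
  · -- linearity
    constructor
    · intro β γ
      funext x
      show Tmap B ε (β + γ) x = Tmap B ε β x + Tmap B ε γ x
      by_cases hx : x ∈ polydisk B (fun _ => 1)
      · rw [Tmap_eq_of_mem B ε _ hx, Tmap_eq_of_mem B ε _ hx, Tmap_eq_of_mem B ε _ hx]
        rw [← Summable.tsum_add (Summable.of_norm (summable_TF B hε β hx))
          (Summable.of_norm (summable_TF B hε γ hx))]
        apply tsum_congr
        intro j
        have hc : ((β + γ : lp (fun _ : ℕ => ℂ) 1) : ∀ _ : ℕ, ℂ) j = β j + γ j := by
          rw [lp.coeFn_add]; rfl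
        rw [hc]; ring
      · rw [Tmap, Tmap, Tmap]
        simp only [if_neg hx]
        ring
    · intro a β
      funext x
      show Tmap B ε (a • β) x = a • Tmap B ε β x
      by_cases hx : x ∈ polydisk B (fun _ => 1)
      · rw [Tmap_eq_of_mem B ε _ hx, Tmap_eq_of_mem B ε _ hx]
        rw [smul_eq_mul, ← tsum_mul_left]
        apply tsum_congr
        intro j
        have hc : ((a • β : lp (fun _ : ℕ => ℂ) 1) : ∀ _ : ℕ, ℂ) j = a * β j := by
          rw [lp.coeFn_smul]; rfl
        rw [hc]; ring
      · rw [Tmap, Tmap]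
        simp only [if_neg hx]
        rw [smul_eq_mul, mul_zero]
  · -- norm bounds
    intro β
    constructor
    · intro x hx
      exact Tmap_norm_le B hε β hx
    · -- lower bound for the sup
      have hbdd : BddAbove (Set.range fun x : X =>
          ⨆ _ : x ∈ polydisk B (fun _ => 1), ‖Tmap B ε β x‖) := by
        refine ⟨(1+ε)*‖β‖, ?_⟩
        rintro y ⟨x, rfl⟩
        show (⨆ _ : x ∈ polydisk B (fun _ => 1), ‖Tmap B ε β x‖) ≤ (1+ε)*‖β‖
        by_cases hx : x ∈ polydisk B (fun _ => 1)
        · haveI : Nonempty (x ∈ polydisk B (fun _ => 1)) := ⟨hx⟩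
          rw [ciSup_const]
          exact Tmap_norm_le B hε β hx
        · haveI : IsEmpty (x ∈ polydisk B (fun _ => 1)) := ⟨hx⟩
          rw [Real.iSup_of_isEmpty]
          positivity
      apply le_of_forall_pos_le_add
      intro δ hδ
      obtain ⟨N, hN⟩ : ∃ N, ‖β‖ - δ/2 ≤ ∑ j ∈ Finset.range N, ‖β j‖ := by
        have hpart : Tendsto (fun N => ∑ j ∈ Finset.range N, ‖β j‖) atTop (𝓝 ‖β‖) := by
          rw [beta_norm]
          exact (beta_summable β).hasSum.tendsto_sum_nat
        exact (hpart.eventually (eventually_ge_nhds (by linarith))).exists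
      have hβn : (0:ℝ) ≤ ‖β‖ := norm_nonneg β
      obtain ⟨rr, hrr0, hrr1, hrrkey⟩ :
          ∃ rr : ℝ, 0 ≤ rr ∧ rr < 1 ∧ (1 - rr) * (‖β‖ + 1) ≤ δ/2 := by
        refine ⟨1 - min (1/2) (δ/(2*(‖β‖+1))), ?_, ?_, ?_⟩
        · have : min (1/2) (δ/(2*(‖β‖+1))) ≤ 1/2 := min_le_left _ _
          linarith
        · have : 0 < min (1/2) (δ/(2*(‖β‖+1))) := lt_min (by norm_num) (by positivity)
          linarith
        · have h1 : (1 : ℝ) - (1 - min (1/2) (δ/(2*(‖β‖+1)))) = min (1/2) (δ/(2*(‖β‖+1))) := by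
            ring
          rw [h1]
          have h2 : min (1/2) (δ/(2*(‖β‖+1))) ≤ δ/(2*(‖β‖+1)) := min_le_right _ _
          have h3 : (0:ℝ) < ‖β‖ + 1 := by linarith
          calc min (1/2) (δ/(2*(‖β‖+1))) * (‖β‖+1) ≤ (δ/(2*(‖β‖+1))) * (‖β‖+1) :=
                mul_le_mul_of_nonneg_right h2 (by linarith)
            _ = δ/2 := by field_simp
      set c : ℕ → ℂ := fun j => (rr:ℂ) *
        (if β j = 0 then 0 else (starRingEnd ℂ) (β j) / ((‖β j‖ : ℝ) : ℂ)) with hcdef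
      have hph : ∀ j, (β j) * (if β j = 0 then 0 else (starRingEnd ℂ) (β j) / ((‖β j‖ : ℝ) : ℂ))
          = ((‖β j‖ : ℝ) : ℂ) := by
        intro j
        by_cases h : β j = 0
        · rw [if_pos h, h, mul_zero]
          simp
        · rw [if_neg h, ← mul_div_assoc, Complex.mul_conj]
          rw [Complex.normSq_eq_norm_sq]
          rw [Complex.ofReal_pow]
          rw [pow_two, mul_div_assoc, div_self, mul_one]
          simp only [ne_eq, Complex.ofReal_eq_zero, norm_eq_zero]
          exact h
      have hphnorm : ∀ j,
          ‖(if β j = 0 then 0 else (starRingEnd ℂ) (β j) / ((‖β j‖ : ℝ) : ℂ))‖ ≤ 1 := by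
        intro j
        by_cases h : β j = 0
        · rw [if_pos h]; simp
        · rw [if_neg h, norm_div]
          have h1 : ‖(starRingEnd ℂ) (β j)‖ = ‖β j‖ := by
            simp
          have h2 : ‖((‖β j‖ : ℝ) : ℂ)‖ = ‖β j‖ := by
            rw [Complex.norm_real, Real.norm_eq_abs, abs_of_nonneg (norm_nonneg _)]
          rw [h1, h2]
          rw [div_self (by simpa using h)]
      have hcnorm : ∀ j, ‖c j‖ ≤ rr := by
        intro j
        rw [hcdef]
        rw [norm_mul]
        have e1 : ‖((rr:ℝ):ℂ)‖ = rr := by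
          rw [Complex.norm_real, Real.norm_eq_abs, abs_of_nonneg hrr0]
        rw [e1]
        calc rr * ‖_‖ ≤ rr * 1 := mul_le_mul_of_nonneg_left (hphnorm j) hrr0
          _ = rr := mul_one rr
      set xw : X := ∑ i ∈ Finset.range N, c i • B.e (2*i) with hxw
      have hxwpd : xw ∈ polydisk B (fun _ => 1) := by
        intro k
        show ‖B.coord k xw‖ < 1
        by_cases hk : ∃ j, j < N ∧ k = 2*j
        · obtain ⟨j, hj, rfl⟩ := hk
          rw [hxw, coord_evpt_even B N c hj]
          exact lt_of_le_of_lt (hcnorm j) hrr1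
        · push_neg at hk
          rw [hxw, coord_evpt_other B N c hk]
          norm_num
      have hSx : ∀ j, Sfun B j xw = 1 := by
        intro j
        rw [Sfun]
        have h0 : ∀ n, B.coord (blk j n) xw = 0 := by
          intro n
          rw [hxw]
          exact coord_evpt_other B N c (fun i _ => blk_ne_even j n i)
        have heq2 : (fun n => ((wt n : ℝ):ℂ) * Mob (B.coord (blk j n) xw))
            = fun n => ((wt n : ℝ):ℂ) := by
          funext n; rw [h0 n, mob_zero, mul_one]
        rw [heq2, tsum_wtC]
      have hFx : ∀ j, Ffun B ε j xw = B.coord (2*j) xw := by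
        intro j
        rw [Ffun, hSx j]
        simp
      have hval : Tmap B ε β xw = (rr:ℂ) * ∑ j ∈ Finset.range N, ((‖β j‖:ℝ) : ℂ) := by
        rw [Tmap_eq_of_mem B ε β hxwpd]
        rw [tsum_eq_sum (s := Finset.range N) ?_]
        · rw [Finset.mul_sum]
          apply Finset.sum_congr rfl
          intro j hj
          rw [hFx j, hxw, coord_evpt_even B N c (Finset.mem_range.1 hj), hcdef]
          rw [← mul_assoc, mul_comm ((β j : ℂ)) ((rr:ℝ):ℂ), mul_assoc, hph j]
        · intro j hj
          rw [hFx j, hxw, coord_evpt_other B N c ?_, mul_zero]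
          intro i hi hi2
          have : j = i := by omega
          exact hj (by rw [this]; exact Finset.mem_range.2 hi)
      have hvnorm : ‖Tmap B ε β xw‖ = rr * ∑ j ∈ Finset.range N, ‖β j‖ := by
        rw [hval, norm_mul]
        have e1 : ‖((rr:ℝ):ℂ)‖ = rr := by
          rw [Complex.norm_real, Real.norm_eq_abs, abs_of_nonneg hrr0]
        have e2 : (∑ j ∈ Finset.range N, ((‖β j‖:ℝ) : ℂ))
            = (((∑ j ∈ Finset.range N, ‖β j‖ : ℝ)) : ℂ) := by
          norm_cast
        rw [e1, e2, Complex.norm_real, Real.norm_eq_abs,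
          abs_of_nonneg (Finset.sum_nonneg (fun _ _ => norm_nonneg _))]
      have hle : ‖Tmap B ε β xw‖ ≤ ⨆ x ∈ polydisk B (fun _ => 1), ‖Tmap B ε β x‖ := by
        have e : (⨆ _ : xw ∈ polydisk B (fun _ => 1), ‖Tmap B ε β xw‖) = ‖Tmap B ε β xw‖ := by
          haveI : Nonempty (xw ∈ polydisk B (fun _ => 1)) := ⟨hxwpd⟩
          exact ciSup_const
        rw [← e]
        exact le_ciSup hbdd xw
      have hparts : ∑ j ∈ Finset.range N, ‖β j‖ ≤ ‖β‖ := by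
        rw [beta_norm]
        exact Summable.sum_le_tsum _ (fun i _ => norm_nonneg _) (beta_summable β)
      have hfinal : ‖β‖ - δ ≤ rr * ∑ j ∈ Finset.range N, ‖β j‖ := by
        have h7 : ∑ j ∈ Finset.range N, ‖β j‖ ≤ ‖β‖ + 1 := by linarith
        have h8 : (0:ℝ) ≤ ∑ j ∈ Finset.range N, ‖β j‖ :=
          Finset.sum_nonneg (fun _ _ => norm_nonneg _)
        have h5 : (1 - rr) * (∑ j ∈ Finset.range N, ‖β j‖) ≤ δ/2 := by
          calc (1 - rr) * (∑ j ∈ Finset.range N, ‖β j‖)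
              ≤ (1 - rr) * (‖β‖ + 1) := by
                apply mul_le_mul_of_nonneg_left h7 (by linarith)
            _ ≤ δ/2 := hrrkey
        nlinarith [h5, hN]
      linarith [hle, hfinal, hvnorm.symm.le, hvnorm.le]
  · -- richness
    intro β hβ0 u hu
    have hβex : ∃ j, β j ≠ 0 := by
      by_contra h
      push_neg at h
      exact hβ0 (lp.ext (funext h))
    obtain ⟨j₀, hj₀⟩ := hβex
    have hρ0 : (0:ℝ) ≤ ρ := le_of_lt hρ
    set K0 : ℝ := (1+ρ)/(1-ρ) with hK0def
    have hK01 : 1 ≤ K0 := K0_ge_one hρ0 hρ1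
    set Su : ℕ → ℂ := fun j => ∑' n, ((wt n:ℝ):ℂ) * Mob (u (blk j n)) with hSudef
    set Fu : ℕ → ℂ := fun j =>
      u (2*j) + ceps ε * (Complex.exp (-Su j) - Complex.exp (-1)) with hFudef
    have hFu_norm : ∀ j, ‖Fu j‖ ≤ 1 + ε := fun j =>
      Fshape_norm_le hε (le_trans (hu _) (le_of_lt hρ1)) (exp_negSu_norm_le_one hρ1 hu j)
    have hsumFu : Summable fun j => (β j) * Fu j := by
      apply Summable.of_norm
      apply Summable.of_nonneg_of_le (fun j => norm_nonneg _) (fun j => ?_)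
        ((beta_summable β).mul_right (1+ε))
      rw [norm_mul]
      exact mul_le_mul_of_nonneg_left (hFu_norm j) (norm_nonneg _)
    set Kc : ℂ := ∑' j, (β j) * Fu j with hKc
    have hcepsne : ceps ε ≠ 0 := by
      rw [ceps]
      simp only [ne_eq, Complex.ofReal_eq_zero]
      exact ne_of_gt (by linarith)
    set cc : ℂ := ceps ε * β j₀ * Complex.exp (-Su j₀) with hccdef
    have hcc : cc ≠ 0 := mul_ne_zero (mul_ne_zero hcepsne hj₀) (Complex.exp_ne_zero _)
    have hccpos : 0 < ‖cc‖ := norm_pos_iff.2 hcc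
    refine ⟨Kc - cc/2, ‖cc‖/4, by positivity, ?_⟩
    intro lam hlam
    set q : ℂ := (lam - (Kc - cc)) / cc with hqdef
    have hq : cc * q = lam - (Kc - cc) := by
      rw [hqdef, mul_comm, div_mul_cancel₀ _ hcc]
    have hqhalf : ‖q - 1/2‖ < 1/4 := by
      have e : q - 1/2 = (lam - (Kc - cc/2))/cc := by
        rw [hqdef]
        field_simp
        ring
      rw [e, norm_div, div_lt_iff₀ hccpos]
      have hd := mem_ball.1 hlam
      rw [dist_eq_norm] at hd
      linarith
    have hhalfnorm : ‖(1/2 : ℂ)‖ = 1/2 := by norm_num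
    have hquarter : (1:ℝ)/4 ≤ ‖q‖ := by
      have h := norm_sub_le q (q - 1/2)
      have e : q - (q - 1/2) = 1/2 := by ring
      rw [e, hhalfnorm] at h
      linarith
    have hqlt : ‖q‖ < 1 := by
      have h := norm_add_le (q - 1/2) (1/2 : ℂ)
      have e : q - 1/2 + 1/2 = q := by ring
      rw [e, hhalfnorm] at h
      linarith
    have hq0 : q ≠ 0 := by
      intro h
      rw [h, norm_zero] at hquarter
      linarith
    set w : ℂ := -Complex.log q with hwdef
    have hwre : 0 < w.re := by
      rw [hwdef, Complex.neg_re, Complex.log_re]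
      have h1 : 0 < ‖q‖ := norm_pos_iff.2 hq0
      have h2 : ‖q‖ < 1 := hqlt
      linarith [Real.log_neg h1 h2]
    have hexpw : Complex.exp (-w) = q := by
      rw [hwdef, neg_neg, Complex.exp_log hq0]
    set v : ℕ → ℂ := fun m => Mob (w / ((wt m : ℝ):ℂ)) with hvdef
    have hwdiv_re : ∀ m, 0 < (w / ((wt m:ℝ):ℂ)).re := by
      intro m
      rw [Complex.div_ofReal_re]
      exact div_pos hwre (wt_pos m)
    have hv1 : ∀ m, ‖v m‖ < 1 := fun m => mob_norm_lt_one (hwdiv_re m)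
    set xs : ℕ → X := fun m =>
      (∑ j ∈ Finset.range m, u j • B.e j) + v m • B.e (blk j₀ m) with hxs
    have hphm : ∀ m, m ≤ blk j₀ m := fun m => blk_ge_right j₀ m
    have hcoord : ∀ m k, B.coord k (xs m)
        = if k < m then u k else if k = blk j₀ m then v m else 0 := by
      intro m k
      rw [hxs]
      exact coord_headv B m u (v m) (blk j₀ m) (hphm m) k
    have hxspd : ∀ m, xs m ∈ polydisk B (fun _ => 1) := by
      intro m k
      show ‖B.coord k (xs m)‖ < 1
      rw [hcoord m k]
      by_cases h1 : k < m
      · rw [if_pos h1]; exact lt_of_le_of_lt (hu k) hρ1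
      · rw [if_neg h1]
        by_cases h2 : k = blk j₀ m
        · rw [if_pos h2]; exact hv1 m
        · rw [if_neg h2]; norm_num
    have hcoordblk : ∀ (j : ℕ) (m n : ℕ), B.coord (blk j n) (xs m)
        = if blk j n < m then u (blk j n) else (if j = j₀ ∧ n = m then v m else 0) := by
      intro j m n
      rw [hcoord m (blk j n)]
      by_cases h1 : blk j n < m
      · rw [if_pos h1, if_pos h1]
      · rw [if_neg h1, if_neg h1]
        by_cases h2 : blk j n = blk j₀ m
        · obtain ⟨e1, e2⟩ := blk_inj h2
          rw [if_pos h2, if_pos ⟨e1, e2⟩]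
        · rw [if_neg h2, if_neg (fun hc => h2 (by rw [hc.1, hc.2]))]
    have hboundS : ∀ (j m n : ℕ), (j ≠ j₀ ∨ n ≠ m) →
        ‖((wt n:ℝ):ℂ) * Mob (B.coord (blk j n) (xs m))‖ ≤ wt n * K0 := by
      intro j m n hor
      rw [hcoordblk j m n]
      by_cases h1 : blk j n < m
      · rw [if_pos h1, norm_wtC_mul]
        exact mul_le_mul_of_nonneg_left (mob_norm_le (hu _) hρ1) (wt_pos n).le
      · rw [if_neg h1, if_neg ?_]
        · rw [mob_zero, mul_one, Complex.norm_real, Real.norm_eq_abs,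
            abs_of_pos (wt_pos n)]
          nlinarith [wt_pos n]
        · rintro ⟨h2, h3⟩
          rcases hor with h | h
          exacts [h h2, h h3]
    have hSlim : ∀ j, j ≠ j₀ → Tendsto (fun m => Sfun B j (xs m)) atTop (𝓝 (Su j)) := by
      intro j hj
      have := tendsto_tsum_dominated
        (F := fun m n => ((wt n:ℝ):ℂ) * Mob (B.coord (blk j n) (xs m)))
        (g := fun n => ((wt n:ℝ):ℂ) * Mob (u (blk j n)))
        (bound := fun n => wt n * K0)
        (summable_wt.mul_right _)
        (fun n => by
          apply Tendsto.congr' ?_ tendsto_const_nhds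
          filter_upwards [eventually_gt_atTop (blk j n)] with m hm
          rw [hcoordblk j m n, if_pos hm])
        (fun m n => hboundS j m n (Or.inl hj))
      exact this
    have hSlim0 : Tendsto (fun m => Sfun B j₀ (xs m)) atTop (𝓝 (Su j₀ + w)) := by
      have hvm : ∀ m, ((wt m:ℝ):ℂ) * Mob (v m) = w := by
        intro m
        rw [hvdef]
        rw [mob_invol (one_add_ne_zero_of_re_pos (hwdiv_re m))]
        rw [mul_comm, div_mul_cancel₀ _ (wt_ne_zero m)]
      have hdecomp : ∀ m, Sfun B j₀ (xs m)
          = (∑' n, (if n = m then ((wt n:ℝ):ℂ)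
              else ((wt n:ℝ):ℂ) * Mob (B.coord (blk j₀ n) (xs m))))
            + (w - ((wt m:ℝ):ℂ)) := by
        intro m
        have hterm : ∀ n, ((wt n:ℝ):ℂ) * Mob (B.coord (blk j₀ n) (xs m))
            = (if n = m then ((wt n:ℝ):ℂ)
                else ((wt n:ℝ):ℂ) * Mob (B.coord (blk j₀ n) (xs m)))
              + (if n = m then (w - ((wt m:ℝ):ℂ)) else 0) := by
          intro n
          by_cases hnm : n = m
          · subst hnm
            rw [if_pos rfl, if_pos rfl]
            have hcv : B.coord (blk j₀ n) (xs n) = v n := by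
              rw [hcoord n (blk j₀ n), if_neg (not_lt.2 (hphm n)), if_pos rfl]
            rw [hcv, hvm n]
            ring
          · rw [if_neg hnm, if_neg hnm, add_zero]
        have hsummh : Summable (fun n => (if n = m then ((wt n:ℝ):ℂ)
            else ((wt n:ℝ):ℂ) * Mob (B.coord (blk j₀ n) (xs m)))) := by
          apply Summable.of_norm_bounded (summable_wt.mul_right K0)
          intro n
          by_cases hnm : n = m
          · rw [if_pos hnm, Complex.norm_real, Real.norm_eq_abs, abs_of_pos (wt_pos n)]
            nlinarith [wt_pos n]
          · rw [if_neg hnm]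
            exact hboundS j₀ m n (Or.inr hnm)
        rw [Sfun, tsum_congr hterm, Summable.tsum_add hsummh
          (summable_of_ne_finset_zero (s := {m}) (fun b hb => if_neg (by simpa using hb)))]
        rw [tsum_ite_eq]
      have h1 : Tendsto (fun m => ∑' n, (if n = m then ((wt n:ℝ):ℂ)
          else ((wt n:ℝ):ℂ) * Mob (B.coord (blk j₀ n) (xs m)))) atTop (𝓝 (Su j₀)) := by
        apply tendsto_tsum_dominated
          (g := fun n => ((wt n:ℝ):ℂ) * Mob (u (blk j₀ n)))
          (bound := fun n => wt n * K0)
          (summable_wt.mul_right _)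
        · intro n
          apply Tendsto.congr' ?_ tendsto_const_nhds
          filter_upwards [eventually_gt_atTop (max n (blk j₀ n))] with m hm
          rw [max_lt_iff] at hm
          rw [if_neg (by omega), hcoordblk j₀ m n, if_pos hm.2]
        · intro m n
          by_cases hnm : n = m
          · rw [if_pos hnm, Complex.norm_real, Real.norm_eq_abs, abs_of_pos (wt_pos n)]
            nlinarith [wt_pos n]
          · rw [if_neg hnm]
            exact hboundS j₀ m n (Or.inr hnm)
      have h2 : Tendsto (fun m => w - ((wt m:ℝ):ℂ)) atTop (𝓝 (w - 0)) := by
        apply Tendsto.const_sub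
        have : Tendsto (fun m => ((wt m:ℝ):ℂ)) atTop (𝓝 ((0:ℝ):ℂ)) :=
          (Complex.continuous_ofReal.tendsto 0).comp wt_tendsto
        simpa using this
      have h3 := h1.add h2
      rw [sub_zero] at h3
      exact Tendsto.congr (fun m => (hdecomp m).symm) h3
    have hSlimAll : ∀ j, Tendsto (fun m => Sfun B j (xs m)) atTop
        (𝓝 (Su j + (if j = j₀ then w else 0))) := by
      intro j
      by_cases hj : j = j₀
      · rw [if_pos hj, hj]
        exact hSlim0
      · rw [if_neg hj, add_zero]
        exact hSlim j hj
    have hcoord2j : ∀ j, Tendsto (fun m => B.coord (2*j) (xs m)) atTop (𝓝 (u (2*j))) := by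
      intro j
      apply Tendsto.congr' ?_ tendsto_const_nhds
      filter_upwards [eventually_gt_atTop (2*j)] with m hm
      rw [hcoord m (2*j), if_pos hm]
    set L : ℕ → ℂ := fun j => u (2*j)
      + ceps ε * (Complex.exp (-(Su j + (if j = j₀ then w else 0))) - Complex.exp (-1)) with hL
    have hFlim : ∀ j, Tendsto (fun m => Ffun B ε j (xs m)) atTop (𝓝 (L j)) := by
      intro j
      rw [hL]
      apply Tendsto.add (hcoord2j j)
      apply Tendsto.const_mul
      apply Tendsto.sub_const
      exact ((hSlimAll j).neg).cexp
    have hmain : Tendsto (fun m => ∑' j, (β j) * Ffun B ε j (xs m)) atTop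
        (𝓝 (∑' j, (β j) * L j)) := by
      apply tendsto_tsum_dominated
        (bound := fun j => ‖β j‖ * (1+ε))
        ((beta_summable β).mul_right _)
      · intro j
        exact (hFlim j).const_mul (β j)
      · intro m j
        rw [norm_mul]
        exact mul_le_mul_of_nonneg_left (F_norm_le B hε j (hxspd m)) (norm_nonneg _)
    have hLsplit : ∀ j, (β j) * L j = (β j) * Fu j + (if j = j₀ then cc * (q - 1) else 0) := by
      intro j
      by_cases hj : j = j₀
      · rw [if_pos hj, hL, hFudef]
        simp only [if_pos hj]
        rw [hj]
        have e1 : Complex.exp (-(Su j₀ + w)) = Complex.exp (-Su j₀) * q := by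
          rw [neg_add, Complex.exp_add, hexpw]
        rw [e1, hccdef]
        ring
      · rw [if_neg hj, hL, hFudef]
        simp only [if_neg hj]
        rw [add_zero, add_zero]
    have htsum : ∑' j, (β j) * L j = lam := by
      rw [tsum_congr hLsplit, Summable.tsum_add hsumFu
        (summable_of_ne_finset_zero (s := {j₀}) (fun b hb => if_neg (by simpa using hb)))]
      rw [tsum_ite_eq]
      rw [← hKc]
      linear_combination hq
    refine ⟨ℕ, atTop, xs, atTop_neBot, hxspd, ?_, ?_⟩
    · -- pairing condition
      intro a
      have hasumn : Summable (fun k => ‖a k‖) := beta_summable a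
      have hsum_au : Summable (fun k => (a k) * u k) := by
        apply Summable.of_norm
        apply Summable.of_nonneg_of_le (fun k => norm_nonneg _) (fun k => ?_)
          (hasumn.mul_right ρ)
        rw [norm_mul]
        exact mul_le_mul_of_nonneg_left (hu k) (norm_nonneg _)
      have heval : ∀ m, (∑' k, (a k) * B.coord k (xs m))
          = (a (blk j₀ m)) * v m + ∑ k ∈ Finset.range m, (a k) * u k := by
        intro m
        rw [tsum_eq_sum (s := insert (blk j₀ m) (Finset.range m)) ?_]
        · rw [Finset.sum_insert (by
            simp only [Finset.mem_range]
            exact not_lt.2 (hphm m))]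
          congr 1
          · rw [hcoord m (blk j₀ m), if_neg (not_lt.2 (hphm m)), if_pos rfl]
          · apply Finset.sum_congr rfl
            intro k hk
            rw [hcoord m k, if_pos (Finset.mem_range.1 hk)]
        · intro k hk
          simp only [Finset.mem_insert, Finset.mem_range] at hk
          push_neg at hk
          rw [hcoord m k, if_neg (by omega), if_neg hk.1, mul_zero]
      have h1 : Tendsto (fun m => (a (blk j₀ m)) * v m) atTop (𝓝 0) := by
        apply squeeze_zero_norm (a := fun m => ‖a (blk j₀ m)‖)
        · intro m
          rw [norm_mul]
          exact mul_le_of_le_one_right (norm_nonneg _) (le_of_lt (hv1 m))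
        · exact hasumn.tendsto_atTop_zero.comp (tendsto_atTop_mono hphm tendsto_id)
      have h2 : Tendsto (fun m => ∑ k ∈ Finset.range m, (a k) * u k) atTop
          (𝓝 (∑' k, (a k) * u k)) := hsum_au.hasSum.tendsto_sum_nat
      have h3 := h1.add h2
      rw [zero_add] at h3
      exact Tendsto.congr (fun m => (heval m).symm) h3
    · -- value convergence
      have heq : ∀ m, Tmap B ε β (xs m) = ∑' j, (β j) * Ffun B ε j (xs m) :=
        fun m => Tmap_eq_of_mem B ε β (hxspd m)
      rw [← htsum]
      exact Tendsto.congr (fun m => (heq m).symm) hmain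
end
end
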